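/- There do not exist 2×2 real positive semidefinite matrices X₁₁, X₁₂, X₂₁, X₂₂ such that X₁₁ + X₁₂ = B₁, X₂₁ + X₂₂ = B₂, X₁₁ + X₂₁ = C₁, and X₁₂ + X₂₂ = C₂, where B₁ = [[1/2, 1/2], [1/2, 1/2]], B₂ = [[1/2, -1/2], [-1/2, 1/2]], C₁ = [[1, 0], [0, 0]], and C₂ = [[0, 0], [0, 1]]. Consequently, the positive commutative monoid of 2×2 real positive semidefinite matrices under matrix addition does not have the transportation property, even though B₁ + B₂ = C₁ + C₂ = I is a balanced instance. -/

import Mathlib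

open Matrix

lemma quad_form (M : Matrix (Fin 2) (Fin 2) ℝ) (hM : M.PosSemidef) (t s : ℝ) :
    0 ≤ M 0 0 * t * t + M 0 1 * t * s + M 1 0 * s * t + M 1 1 * s * s := by
  have := hM.dotProduct_mulVec_nonneg ![t, s]
  simp [dotProduct, mulVec, Fin.sum_univ_two] at this
  linarith [this]

lemma aux_c_zero (a c : ℝ) (ha : 0 ≤ a) (h : ∀ t : ℝ, 0 ≤ a * t ^ 2 + 2 * c * t) :
    c = 0 := by
  have ha1 : (0:ℝ) < a + 1 := by linarith
  have key := h (-c / (a + 1))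
  have e : a * (-c / (a + 1)) ^ 2 + 2 * c * (-c / (a + 1))
      = (a * c ^ 2 - 2 * c ^ 2 * (a + 1)) / ((a + 1) ^ 2) := by
    field_simp; ring
  rw [e, le_div_iff₀ (by positivity)] at key
  nlinarith [sq_nonneg c, key]

lemma hermit (M : Matrix (Fin 2) (Fin 2) ℝ) (hM : M.PosSemidef) : M 1 0 = M 0 1 := by
  have := congrFun (congrFun hM.1 1) 0
  simpa [Matrix.conjTranspose_apply] using this.symm

lemma offdiag_zero (M : Matrix (Fin 2) (Fin 2) ℝ) (hM : M.PosSemidef)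
    (h : M 1 1 = 0) : M 0 1 = 0 := by
  have hs := hermit M hM
  have h00 : 0 ≤ M 0 0 := by have := quad_form M hM 1 0; linarith
  apply aux_c_zero (M 0 0) (M 0 1) h00
  intro t
  have := quad_form M hM t 1
  rw [hs, h] at this
  nlinarith [this]

lemma offdiag_zero' (M : Matrix (Fin 2) (Fin 2) ℝ) (hM : M.PosSemidef)
    (h : M 0 0 = 0) : M 0 1 = 0 := by
  have hs := hermit M hM
  have h11 : 0 ≤ M 1 1 := by have := quad_form M hM 0 1; linarith
  apply aux_c_zero (M 1 1) (M 0 1) h11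
  intro t
  have := quad_form M hM 1 t
  rw [hs, h] at this
  nlinarith [this]

/-- there are no 2×2 real positive semidefinite matrices
`X₁₁, X₁₂, X₂₁, X₂₂` with row sums `B₁ = (I+X)/2`, `B₂ = (I-X)/2` and column
sums `C₁ = (I+Z)/2`, `C₂ = (I-Z)/2`, where `X` and `Z` are Pauli matrices.
Hence the positive commutative monoid of 2×2 real positive semidefinite
matrices under addition does not have the transportation property. -/
theorem psd_no_transportation_solution :
    ¬ ∃ X11 X12 X21 X22 : Matrix (Fin 2) (Fin 2) ℝ,
      X11.PosSemidef ∧ X12.PosSemidef ∧ X21.PosSemidef ∧ X22.PosSemidef ∧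
      X11 + X12 = !![(1 : ℝ)/2, 1/2; 1/2, 1/2] ∧
      X21 + X22 = !![(1 : ℝ)/2, -(1/2); -(1/2), 1/2] ∧
      X11 + X21 = !![(1 : ℝ), 0; 0, 0] ∧
      X12 + X22 = !![(0 : ℝ), 0; 0, 1] := by
  rintro ⟨X11, X12, X21, X22, h11, h12, h21, h22, hB1, hB2, hC1, hC2⟩
  have e1 : X11 1 1 + X21 1 1 = 0 := by
    have := congrFun (congrFun hC1 1) 1; simpa using this
  have e2 : X12 0 0 + X22 0 0 = 0 := by
    have := congrFun (congrFun hC2 0) 0; simpa using this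
  have d11 : 0 ≤ X11 1 1 := by have := quad_form X11 h11 0 1; linarith
  have d21 : 0 ≤ X21 1 1 := by have := quad_form X21 h21 0 1; linarith
  have d12 : 0 ≤ X12 0 0 := by have := quad_form X12 h12 1 0; linarith
  have d22 : 0 ≤ X22 0 0 := by have := quad_form X22 h22 1 0; linarith
  have z11 : X11 0 1 = 0 := offdiag_zero X11 h11 (by linarith)
  have z12 : X12 0 1 = 0 := offdiag_zero' X12 h12 (by linarith)
  have : X11 0 1 + X12 0 1 = 1/2 := by
    have := congrFun (congrFun hB1 0) 1; simpa using this
  rw [z11, z12] at this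
  norm_num at this
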